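/- Let F : ℝⁿ → ℝⁿ be twice continuously differentiable and define the quotient gradient system vector field Q(x) = -DF(x)ᵀF(x), where DF(x) is the (Fréchet) derivative of F at x and DF(x)ᵀ its adjoint. If x̂ satisfies F(x̂) = 0 and DF(x̂) is invertible, then the linearization of Q at x̂ is negative definite: for every nonzero vector y, ⟨(DQ(x̂))y, y⟩ < 0 (so x̂ is a stable equilibrium point of ẋ = Q(x)). -/

import Mathlib

open scoped RealInnerProductSpace

/-- The adjoint as a continuous linear map on endomorphisms of `EuclideanSpace ℝ (Fin n)`. -/
noncomputable def adjCLM (n : ℕ) :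
    (EuclideanSpace ℝ (Fin n) →L[ℝ] EuclideanSpace ℝ (Fin n)) →L[ℝ]
    (EuclideanSpace ℝ (Fin n) →L[ℝ] EuclideanSpace ℝ (Fin n)) :=
  LinearMap.mkContinuous
    { toFun := ContinuousLinearMap.adjoint
      map_add' := fun L M => by simp [map_add]
      map_smul' := fun r L => by
        have := ContinuousLinearMap.adjoint.map_smulₛₗ r L
        simp }
    1 (fun L => by rw [one_mul]; exact (ContinuousLinearMap.adjoint.norm_map L).le)

/-- Proposition 1: at a zero of `F` where `DF` is invertible, the linearization of the
quotient gradient system `Q(x) = -DF(x)ᵀ F(x)` is negative definite. -/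
theorem qgs_linearization_negative_definite (n : ℕ)
    (F Q : EuclideanSpace ℝ (Fin n) → EuclideanSpace ℝ (Fin n))
    (hF : ContDiff ℝ 2 F)
    (hQ : ∀ x, Q x = -(ContinuousLinearMap.adjoint (fderiv ℝ F x)) (F x))
    (xhat : EuclideanSpace ℝ (Fin n))
    (hzero : F xhat = 0)
    (hinv : IsUnit (fderiv ℝ F xhat)) :
    ∀ y : EuclideanSpace ℝ (Fin n), y ≠ 0 → ⟪fderiv ℝ Q xhat y, y⟫ < 0 := by
  intro y hy
  set A := fderiv ℝ F xhat with hA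
  -- F is differentiable at xhat
  have hFd : HasFDerivAt F A xhat :=
    ((hF.differentiable two_ne_zero) xhat).hasFDerivAt
  -- fderiv F is C¹, hence differentiable at xhat
  have hDF1 : ContDiff ℝ 1 (fun x => fderiv ℝ F x) :=
    hF.fderiv_right (by norm_num)
  have hD2 : HasFDerivAt (fun x => fderiv ℝ F x)
      (fderiv ℝ (fun x => fderiv ℝ F x) xhat) xhat :=
    ((hDF1.differentiable one_ne_zero) xhat).hasFDerivAt
  set D2 := fderiv ℝ (fun x => fderiv ℝ F x) xhat with hD2def
  -- the coefficient map x ↦ (fderiv F x)ᵀ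
  have hc : HasFDerivAt (fun x => adjCLM n (fderiv ℝ F x))
      ((adjCLM n).comp D2) xhat :=
    (adjCLM n).hasFDerivAt.comp xhat hD2
  have hg : HasFDerivAt (fun x => (adjCLM n (fderiv ℝ F x)) (F x))
      ((adjCLM n A).comp A + ((adjCLM n).comp D2).flip (F xhat)) xhat :=
    hc.clm_apply hFd
  have hQfun : Q = fun x => -((adjCLM n (fderiv ℝ F x)) (F x)) := by
    funext x
    rw [hQ x]
    rfl
  have hQd : HasFDerivAt Q
      (-((adjCLM n A).comp A + ((adjCLM n).comp D2).flip (F xhat))) xhat := by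
    rw [hQfun]
    exact hg.neg
  have hfQ : fderiv ℝ Q xhat =
      -((adjCLM n A).comp A + ((adjCLM n).comp D2).flip (F xhat)) :=
    hQd.fderiv
  have hval : fderiv ℝ Q xhat y = -(ContinuousLinearMap.adjoint A (A y)) := by
    rw [hfQ]
    simp [hzero, ContinuousLinearMap.flip_apply]
    rfl
  have hAy : A y ≠ 0 := by
    intro h
    obtain ⟨u, hu⟩ := hinv
    apply hy
    have : (↑u⁻¹ * ↑u : EuclideanSpace ℝ (Fin n) →L[ℝ] EuclideanSpace ℝ (Fin n)) y = y := by
      rw [u.inv_mul]; rfl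
    rw [ContinuousLinearMap.mul_apply, hu, h, map_zero] at this
    exact this.symm
  rw [hval]
  have : ⟪-(ContinuousLinearMap.adjoint A (A y)), y⟫ = -⟪A y, A y⟫ := by
    rw [inner_neg_left, ContinuousLinearMap.adjoint_inner_left]
  rw [this]
  have hpos : (0:ℝ) < ⟪A y, A y⟫ := by
    rw [real_inner_self_eq_norm_sq]
    exact pow_pos (norm_pos_iff.mpr hAy) 2
  linarith
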